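/- arXiv:1104.4542 — 2 statements merged into one kernel-verified Lean document; each statement's English description precedes it below -/
import Mathlib

section
/- For n ≥ 2 and any k ≥ 0, the subgroup EL_n(π^k O) generated by elementary unipotents with entries in π^k O has finite index in SL_n(O). -/
open Matrix

section Stmt8Aux

variable {O : Type*} [CommRing O]

private theorem stmt8_tv_id {n : ℕ} (p q : Fin n) (hpq : p ≠ q) (x y v : O)
    (huv : (1 + x * y) * v = 1) :
    transvection q p (-(y * v)) * (transvection p q x *
      (transvection q p y * transvection p q (-(x * v)))) =
      Matrix.diagonal (fun i => if i = p then 1 + x * y else if i = q then v else 1) := by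
  have hqp : q ≠ p := hpq.symm
  simp only [transvection, mul_add, add_mul, mul_one, one_mul,
    single_mul_single_same, single_mul_single_of_ne, hpq, hqp, ne_eq, not_false_iff,
    add_zero, zero_add]
  ext i j
  simp only [Matrix.add_apply, Matrix.one_apply, Matrix.diagonal_apply, Matrix.single,
    Matrix.of_apply, Matrix.zero_apply]
  by_cases hpi : p = i <;> by_cases hqi : q = i <;> by_cases hpj : p = j <;>
    by_cases hqj : q = j <;> by_cases hji : j = i <;>
    simp_all [@eq_comm _ i] <;>
    first
      | ring1
      | linear_combination x*huv
      | linear_combination (-x)*huv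
      | linear_combination y*huv
      | linear_combination (-y)*huv
      | linear_combination huv
      | linear_combination (-1 : O)*huv
      | linear_combination x*y*v*huv
      | linear_combination (-(x*y*v))*huv
      | linear_combination v*huv
      | linear_combination (-v)*huv
      | linear_combination (x*y*v - 1)*huv
      | linear_combination (1 - x*y*v)*huv

variable {n k : ℕ} {π : O} {H : Subgroup (Matrix.SpecialLinearGroup (Fin n) O)}

/-- An elementary transvection as an element of `SL_n`. -/
private def Tsl (i j : Fin n) (hij : i ≠ j) (c : O) : Matrix.SpecialLinearGroup (Fin n) O :=
  ⟨Matrix.transvection i j c, Matrix.det_transvection_of_ne i j hij c⟩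

private theorem Tsl_coe (i j : Fin n) (hij : i ≠ j) (c : O) :
    (Tsl i j hij c : Matrix (Fin n) (Fin n) O) = Matrix.transvection i j c := rfl

private theorem stmt8_W_mem
    (hele : ∀ (i j : Fin n) (hij : i ≠ j) (c : O), π ^ k ∣ c → Tsl i j hij c ∈ H)
    (p q : Fin n) (hpq : p ≠ q) (u v : O) (hu : π ^ (2 * k + 1) ∣ u - 1) (huv : u * v = 1) :
    ∃ W ∈ H, (W : Matrix (Fin n) (Fin n) O)
      = Matrix.diagonal (fun i => if i = p then u else if i = q then v else 1) := by
  obtain ⟨c, hc⟩ := hu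
  set x : O := π ^ k with hx
  set y : O := π ^ (k + 1) * c with hy
  have hxyu : 1 + x * y = u := by
    have h1 : x * y = π ^ (2 * k + 1) * c := by
      rw [hx, hy, ← mul_assoc, ← pow_add]
      congr 2
      omega
    rw [h1, ← hc]; ring
  have huv' : (1 + x * y) * v = 1 := by rw [hxyu]; exact huv
  have hdx : π ^ k ∣ x := dvd_refl _
  have hdy : π ^ k ∣ y := ⟨π * c, by rw [hy, pow_succ]; ring⟩
  refine ⟨Tsl q p hpq.symm (-(y * v)) * (Tsl p q hpq x *
      (Tsl q p hpq.symm y * Tsl p q hpq (-(x * v)))), ?_, ?_⟩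
  · exact H.mul_mem (hele _ _ _ _ ((hdy.mul_right v).neg_right))
      (H.mul_mem (hele _ _ _ _ hdx)
        (H.mul_mem (hele _ _ _ _ hdy) (hele _ _ _ _ ((hdx.mul_right v).neg_right))))
  · rw [Matrix.SpecialLinearGroup.coe_mul, Matrix.SpecialLinearGroup.coe_mul,
      Matrix.SpecialLinearGroup.coe_mul, Tsl_coe, Tsl_coe, Tsl_coe, Tsl_coe,
      stmt8_tv_id p q hpq x y v huv', hxyu]

private theorem stmt8_diag_mem
    (hele : ∀ (i j : Fin n) (hij : i ≠ j) (c : O), π ^ k ∣ c → Tsl i j hij c ∈ H)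
    (hunit : ∀ u : O, π ^ (2 * k + 1) ∣ u - 1 → ∃ v, u * v = 1) :
    ∀ (d r : ℕ) (A : Matrix.SpecialLinearGroup (Fin n) O), n ≤ r + d →
      (∀ i j : Fin n, i ≠ j → (A : Matrix (Fin n) (Fin n) O) i j = 0) →
      (∀ i : Fin n, (i : ℕ) < r → (A : Matrix (Fin n) (Fin n) O) i i = 1) →
      (∀ i : Fin n, π ^ (2 * k + 1) ∣ (A : Matrix (Fin n) (Fin n) O) i i - 1) →
      A ∈ H := by
  intro d
  induction d with
  | zero =>
    intro r A hnr hoff hdiag _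
    have hA : (A : Matrix (Fin n) (Fin n) O) = 1 := by
      ext i j
      rcases eq_or_ne i j with rfl | hij
      · rw [Matrix.one_apply_eq]; exact hdiag i (lt_of_lt_of_le i.isLt (by omega))
      · rw [Matrix.one_apply_ne hij]; exact hoff i j hij
    have hA1 : A = 1 := Subtype.ext (by simpa using hA)
    rw [hA1]; exact H.one_mem
  | succ d ih =>
    intro r A hnr hoff hdiag hcong
    by_cases hnd : n ≤ r + d
    · exact ih r A hnd hoff hdiag hcong
    have hr : r < n := by omega
    set p : Fin n := ⟨r, hr⟩ with hp
    by_cases hq : r + 1 < n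
    · set q : Fin n := ⟨r + 1, hq⟩ with hqd
      have hpq : p ≠ q := Fin.ne_of_val_ne (show r ≠ r + 1 by omega)
      obtain ⟨v, hv⟩ := hunit ((A : Matrix (Fin n) (Fin n) O) p p) (hcong p)
      have hvc : π ^ (2 * k + 1) ∣ v - 1 := by
        obtain ⟨c, hc⟩ := hcong p
        exact ⟨-(v * c), by linear_combination hv - v * hc⟩
      obtain ⟨W, hWH, hWc⟩ := stmt8_W_mem hele p q hpq v ((A : Matrix (Fin n) (Fin n) O) p p)
        hvc (by linear_combination hv)
      have hA'c : ∀ i j, ((W * A : Matrix.SpecialLinearGroup (Fin n) O) :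
          Matrix (Fin n) (Fin n) O) i j
          = (if i = p then v else if i = q then (A : Matrix (Fin n) (Fin n) O) p p else 1)
            * (A : Matrix (Fin n) (Fin n) O) i j := by
        intro i j
        rw [Matrix.SpecialLinearGroup.coe_mul, hWc, Matrix.diagonal_mul]
      have hmem' : W * A ∈ H := by
        apply ih (r + 1) (W * A) (by omega)
        · intro i j hij
          rw [hA'c, hoff i j hij, mul_zero]
        · intro i hi
          rw [hA'c]
          by_cases hip : i = p
          · rw [if_pos hip, hip]; linear_combination hv
          · have hir : (i : ℕ) < r := by
              have h1 : (i : ℕ) ≠ r := fun h => hip (Fin.ext h)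
              omega
            have hiq : i ≠ q := Fin.ne_of_val_ne (show (i : ℕ) ≠ r + 1 by omega)
            rw [if_neg hip, if_neg hiq, hdiag i hir, one_mul]
        · intro i
          rw [hA'c]
          by_cases hip : i = p
          · rw [if_pos hip, hip]
            have h0 : v * (A : Matrix (Fin n) (Fin n) O) p p - 1 = 0 := by linear_combination hv
            rw [h0]
            exact dvd_zero _
          · by_cases hiq : i = q
            · rw [if_neg hip, if_pos hiq, hiq]
              obtain ⟨aa, haa⟩ := hcong p
              obtain ⟨bb, hbb⟩ := hcong q
              exact ⟨(A : Matrix (Fin n) (Fin n) O) p p * bb + aa,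
                by linear_combination (A : Matrix (Fin n) (Fin n) O) p p * hbb + haa⟩
            · rw [if_neg hip, if_neg hiq, one_mul]; exact hcong i
      have hAW : A = W⁻¹ * (W * A) := by group
      rw [hAW]; exact H.mul_mem (H.inv_mem hWH) hmem'
    · -- r + 1 = n : A is diagonal with all entries 1 except possibly at p; use det = 1
      have hdet := A.prop
      have hAdiag : (A : Matrix (Fin n) (Fin n) O)
          = Matrix.diagonal (fun i => (A : Matrix (Fin n) (Fin n) O) i i) := by
        ext i j
        rcases eq_or_ne i j with rfl | hij
        · rw [Matrix.diagonal_apply_eq]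
        · rw [Matrix.diagonal_apply_ne _ hij]; exact hoff i j hij
      rw [hAdiag, Matrix.det_diagonal] at hdet
      have hppf : ∀ i : Fin n, i ≠ p → (A : Matrix (Fin n) (Fin n) O) i i = 1 := by
        intro i hip
        apply hdiag
        have h1 : (i : ℕ) ≠ r := fun h => hip (Fin.ext h)
        have := i.isLt
        omega
      have hpp : (A : Matrix (Fin n) (Fin n) O) p p = 1 := by
        rw [Finset.prod_eq_single p (fun i _ hip => hppf i hip)
          (fun h => absurd (Finset.mem_univ p) h)] at hdet
        exact hdet
      have hA1 : (A : Matrix (Fin n) (Fin n) O) = 1 := by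
        ext i j
        rcases eq_or_ne i j with rfl | hij
        · rw [Matrix.one_apply_eq]
          by_cases hip : i = p
          · rw [hip, hpp]
          · exact hppf i hip
        · rw [Matrix.one_apply_ne hij]; exact hoff i j hij
      have : A = 1 := Subtype.ext (by simpa using hA1)
      rw [this]; exact H.one_mem
private theorem stmt8_clear
    (hele : ∀ (i j : Fin n) (hij : i ≠ j) (c : O), π ^ k ∣ c → Tsl i j hij c ∈ H)
    (hunit : ∀ u : O, π ^ (2 * k + 1) ∣ u - 1 → ∃ v, u * v = 1)
    (r : ℕ) (hr : r < n)
    (cont : ∀ B : Matrix.SpecialLinearGroup (Fin n) O,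
      (∀ i j : Fin n, i ≠ j → ((i : ℕ) < r + 1 ∨ (j : ℕ) < r + 1) →
        (B : Matrix (Fin n) (Fin n) O) i j = 0) →
      (∀ i j : Fin n, π ^ (2 * k + 1) ∣
        (B : Matrix (Fin n) (Fin n) O) i j - (1 : Matrix (Fin n) (Fin n) O) i j) →
      B ∈ H) :
    ∀ (s : ℕ) (A : Matrix.SpecialLinearGroup (Fin n) O),
      (∀ i j : Fin n, i ≠ j → ((i : ℕ) < r ∨ (j : ℕ) < r) →
        (A : Matrix (Fin n) (Fin n) O) i j = 0) →
      (∀ i j : Fin n, π ^ (2 * k + 1) ∣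
        (A : Matrix (Fin n) (Fin n) O) i j - (1 : Matrix (Fin n) (Fin n) O) i j) →
      (∀ i : Fin n, r < (i : ℕ) → r + 1 + s ≤ (i : ℕ) →
        (A : Matrix (Fin n) (Fin n) O) i ⟨r, hr⟩ = 0 ∧
        (A : Matrix (Fin n) (Fin n) O) ⟨r, hr⟩ i = 0) →
      A ∈ H := by
  intro s
  induction s with
  | zero =>
    intro A hoff hcong hclr
    refine cont A ?_ hcong
    intro i j hij hlt
    rcases hlt with hi | hj
    · rcases Nat.lt_succ_iff_lt_or_eq.mp hi with h | h
      · exact hoff i j hij (Or.inl h)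
      · have hip : i = ⟨r, hr⟩ := Fin.ext h
        have hjr : (j : ℕ) ≠ r := fun hh => hij (hip.trans (Fin.ext hh.symm))
        rcases Nat.lt_or_ge (j : ℕ) r with hjlt | hjge
        · exact hoff i j hij (Or.inr hjlt)
        · rw [hip]
          exact (hclr j (by omega) (by omega)).2
    · rcases Nat.lt_succ_iff_lt_or_eq.mp hj with h | h
      · exact hoff i j hij (Or.inr h)
      · have hjp : j = ⟨r, hr⟩ := Fin.ext h
        have hir : (i : ℕ) ≠ r := fun hh => hij ((Fin.ext hh : i = ⟨r, hr⟩).trans hjp.symm)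
        rcases Nat.lt_or_ge (i : ℕ) r with hilt | hige
        · exact hoff i j hij (Or.inl hilt)
        · rw [hjp]
          exact (hclr i (by omega) (by omega)).1
  | succ s ihs =>
    intro A hoff hcong hclr
    by_cases hc : r + 1 + s < n
    · set p : Fin n := ⟨r, hr⟩ with hp
      set m : Fin n := ⟨r + 1 + s, hc⟩ with hm
      have hmp : m ≠ p := Fin.ne_of_val_ne (show r + 1 + s ≠ r by omega)
      have hpm : p ≠ m := hmp.symm
      have hApp : π ^ (2 * k + 1) ∣ (A : Matrix (Fin n) (Fin n) O) p p - 1 := by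
        have h := hcong p p; rwa [Matrix.one_apply_eq] at h
      obtain ⟨v, hv⟩ := hunit _ hApp
      have hdmp : π ^ (2 * k + 1) ∣ (A : Matrix (Fin n) (Fin n) O) m p := by
        have h := hcong m p; rwa [Matrix.one_apply_ne hmp, sub_zero] at h
      have hdpm : π ^ (2 * k + 1) ∣ (A : Matrix (Fin n) (Fin n) O) p m := by
        have h := hcong p m; rwa [Matrix.one_apply_ne hpm, sub_zero] at h
      have hkd : (π : O) ^ k ∣ π ^ (2 * k + 1) := pow_dvd_pow π (by omega)
      set a : O := -((A : Matrix (Fin n) (Fin n) O) m p * v) with ha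
      set b : O := -(v * (A : Matrix (Fin n) (Fin n) O) p m) with hb
      have hda : π ^ (2 * k + 1) ∣ a := by
        rw [ha]; exact dvd_neg.mpr (hdmp.mul_right v)
      have hdb : π ^ (2 * k + 1) ∣ b := by
        rw [hb]; exact dvd_neg.mpr (hdpm.mul_left v)
      set L := Tsl m p hmp a with hL
      set R := Tsl p m hpm b with hR
      set B := (A : Matrix (Fin n) (Fin n) O) * Matrix.transvection p m b with hBdef
      have hB : ∀ i j, B i j = (A : Matrix (Fin n) (Fin n) O) i j
          + (if j = m then b * (A : Matrix (Fin n) (Fin n) O) i p else 0) := by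
        intro i j
        by_cases hj : j = m
        · rw [if_pos hj, hj, hBdef, Matrix.mul_transvection_apply_same]
        · rw [if_neg hj, add_zero, hBdef, Matrix.mul_transvection_apply_of_ne _ _ _ _ hj]
      have hA'e : ∀ i j, ((L * (A * R) : Matrix.SpecialLinearGroup (Fin n) O) :
          Matrix (Fin n) (Fin n) O) i j = B i j + (if i = m then a * B p j else 0) := by
        intro i j
        have hcoe : ((L * (A * R) : Matrix.SpecialLinearGroup (Fin n) O) :
            Matrix (Fin n) (Fin n) O) = Matrix.transvection m p a * B := by
          rw [Matrix.SpecialLinearGroup.coe_mul, Matrix.SpecialLinearGroup.coe_mul,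
            hBdef, hL, hR, Tsl_coe, Tsl_coe]
        rw [hcoe]
        by_cases hi : i = m
        · rw [if_pos hi, hi, Matrix.transvection_mul_apply_same]
        · rw [if_neg hi, add_zero, Matrix.transvection_mul_apply_of_ne _ _ _ _ hi]
      have hmemA' : L * (A * R) ∈ H := by
        apply ihs (L * (A * R))
        · -- off-diagonal entries with min < r are zero
          intro i j hij hlt
          rw [hA'e, hB i j]
          by_cases hi : i = m
          · have hjr : (j : ℕ) < r := by
              rcases hlt with h | h
              · exfalso
                rw [hi] at h
                have : (m : ℕ) = r + 1 + s := rfl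
                omega
              · exact h
            have hjm : j ≠ m := Fin.ne_of_val_ne (show (j : ℕ) ≠ r + 1 + s by omega)
            have hjp2 : p ≠ j := Fin.ne_of_val_ne (show r ≠ (j : ℕ) by omega)
            have hij2 : i ≠ j := hij
            rw [if_pos hi, hB p j, if_neg hjm, if_neg hjm, add_zero, add_zero,
              hoff i j hij (Or.inr hjr), hoff p j hjp2 (Or.inr hjr), mul_zero, add_zero]
          · rw [if_neg hi, add_zero]
            by_cases hjm : j = m
            · have hir : (i : ℕ) < r := by
                rcases hlt with h | h
                · exact h
                · exfalso
                  rw [hjm] at h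
                  have : (m : ℕ) = r + 1 + s := rfl
                  omega
              have hipne : i ≠ p := Fin.ne_of_val_ne (show (i : ℕ) ≠ r by omega)
              rw [if_pos hjm, hoff i j hij (Or.inl hir), hoff i p hipne (Or.inl hir),
                mul_zero, add_zero]
            · rw [if_neg hjm, add_zero]
              exact hoff i j hij hlt
        · -- congruence
          intro i j
          rw [hA'e, hB i j]
          have h1 : (A : Matrix (Fin n) (Fin n) O) i j
              + (if j = m then b * (A : Matrix (Fin n) (Fin n) O) i p else 0)
              + (if i = m then a * B p j else 0) - (1 : Matrix (Fin n) (Fin n) O) i j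
              = ((A : Matrix (Fin n) (Fin n) O) i j - (1 : Matrix (Fin n) (Fin n) O) i j)
                + ((if j = m then b * (A : Matrix (Fin n) (Fin n) O) i p else 0)
                  + (if i = m then a * B p j else 0)) := by ring
          rw [h1]
          refine dvd_add (hcong i j) (dvd_add ?_ ?_)
          · by_cases hjm : j = m
            · rw [if_pos hjm]; exact hdb.mul_right _
            · rw [if_neg hjm]; exact dvd_zero _
          · by_cases him : i = m
            · rw [if_pos him]; exact hda.mul_right _
            · rw [if_neg him]; exact dvd_zero _
        · -- clearing invariant at level s
          intro i hri hclge
          by_cases him : i = m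
          · constructor
            · rw [hA'e i p, hB i p, if_neg hpm, add_zero, if_pos him, him,
                hB p p, if_neg hpm, add_zero, ha]
              linear_combination (-((A : Matrix (Fin n) (Fin n) O) m p)) * hv
            · rw [hA'e p i, hB p i, him, if_pos rfl, if_neg hpm, add_zero, hb]
              linear_combination (-((A : Matrix (Fin n) (Fin n) O) p m)) * hv
          · have hige : r + 1 + (s + 1) ≤ (i : ℕ) := by
              have h2 : (i : ℕ) ≠ r + 1 + s := fun hh => him (Fin.ext hh)
              omega
            obtain ⟨h1, h2⟩ := hclr i hri hige
            constructor
            · rw [hA'e i p, hB i p, if_neg hpm, add_zero, if_neg him, add_zero]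
              exact h1
            · rw [hA'e p i, hB p i, if_neg him, add_zero, if_neg hpm, add_zero]
              exact h2
      have hLmem : L ∈ H := by rw [hL]; exact hele _ _ _ _ (hkd.trans hda)
      have hRmem : R ∈ H := by rw [hR]; exact hele _ _ _ _ (hkd.trans hdb)
      have hgrp : A = L⁻¹ * (L * (A * R)) * R⁻¹ := by group
      rw [hgrp]
      exact H.mul_mem (H.mul_mem (H.inv_mem hLmem) hmemA') (H.inv_mem hRmem)
    · apply ihs A hoff hcong
      intro i h1 h2
      exact absurd i.isLt (by omega)

private theorem stmt8_key
    (hele : ∀ (i j : Fin n) (hij : i ≠ j) (c : O), π ^ k ∣ c → Tsl i j hij c ∈ H)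
    (hunit : ∀ u : O, π ^ (2 * k + 1) ∣ u - 1 → ∃ v, u * v = 1) :
    ∀ (d r : ℕ) (A : Matrix.SpecialLinearGroup (Fin n) O), n ≤ r + d →
      (∀ i j : Fin n, i ≠ j → ((i : ℕ) < r ∨ (j : ℕ) < r) →
        (A : Matrix (Fin n) (Fin n) O) i j = 0) →
      (∀ i j : Fin n, π ^ (2 * k + 1) ∣
        (A : Matrix (Fin n) (Fin n) O) i j - (1 : Matrix (Fin n) (Fin n) O) i j) →
      A ∈ H := by
  intro d
  induction d with
  | zero =>
    intro r A hnr hoff hcong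
    apply stmt8_diag_mem hele hunit n 0 A (by omega)
    · intro i j hij
      exact hoff i j hij (Or.inl (by have := i.isLt; omega))
    · intro i hi
      exact absurd hi (by omega)
    · intro i
      have h := hcong i i
      rwa [Matrix.one_apply_eq] at h
  | succ d ih =>
    intro r A hnr hoff hcong
    by_cases hnd : n ≤ r + d
    · exact ih r A hnd hoff hcong
    · have hr : r < n := by omega
      exact stmt8_clear hele hunit r hr
        (fun B hB1 hB2 => ih (r + 1) B (by omega) hB1 hB2) n A hoff hcong
        (fun i h1 h2 => absurd i.isLt (by omega))

end Stmt8Aux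

theorem finq (O : Type*) [CommRing O] [IsDomain O] [IsDiscreteValuationRing O]
    [Finite (O ⧸ IsLocalRing.maximalIdeal O)]
    (π : O) (hπ : Irreducible π) : ∀ m : ℕ, Finite (O ⧸ Ideal.span {π ^ m}) := by
  intro m
  induction m with
  | zero =>
    rw [pow_zero, Ideal.span_singleton_one]
    have : Subsingleton (O ⧸ (⊤ : Ideal O)) := Ideal.Quotient.subsingleton_iff.mpr rfl
    exact Finite.of_subsingleton
  | succ m ihm =>
    set I1 : Ideal O := Ideal.span {π ^ (m + 1)} with hI1
    set Jm : Ideal (O ⧸ I1) := Ideal.map (Ideal.Quotient.mk I1) (Ideal.span {π ^ m}) with hJm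
    have hle : I1 ≤ Ideal.span {π ^ m} :=
      Ideal.span_singleton_le_span_singleton.mpr (pow_dvd_pow π (Nat.le_succ m))
    have hsup : I1 ⊔ Ideal.span {π ^ m} = Ideal.span {π ^ m} := sup_eq_right.2 hle
    have e := DoubleQuot.quotQuotEquivQuotSup I1 (Ideal.span {π ^ m})
    rw [hsup] at e
    haveI f1 : Finite ((O ⧸ I1) ⧸ Jm) := Finite.of_equiv _ e.symm.toEquiv
    haveI f2 : Finite Jm := by
      set s : (O ⧸ IsLocalRing.maximalIdeal O) → O :=
        Function.surjInv Ideal.Quotient.mk_surjective with hs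
      have hsv : ∀ z, Ideal.Quotient.mk (IsLocalRing.maximalIdeal O) (s z) = z :=
        fun z => Function.surjInv_eq _ z
      have gmem : ∀ z, Ideal.Quotient.mk I1 (s z * π ^ m) ∈ Jm := by
        intro z
        rw [_root_.map_mul]
        exact Ideal.mul_mem_left _ _
          (Ideal.mem_map_of_mem _ (Ideal.mem_span_singleton_self _))
      refine Finite.of_surjective (fun z => (⟨Ideal.Quotient.mk I1 (s z * π ^ m), gmem z⟩ : Jm)) ?_
      rintro ⟨z, hz⟩
      rw [hJm, Ideal.map_span, Set.image_singleton] at hz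
      obtain ⟨a, ha⟩ := Ideal.mem_span_singleton'.mp hz
      obtain ⟨c, rfl⟩ := Ideal.Quotient.mk_surjective a
      refine ⟨Ideal.Quotient.mk (IsLocalRing.maximalIdeal O) c, Subtype.ext ?_⟩
      have hmem : s (Ideal.Quotient.mk (IsLocalRing.maximalIdeal O) c) - c
          ∈ IsLocalRing.maximalIdeal O := by
        rw [← Ideal.Quotient.eq_zero_iff_mem, map_sub, hsv, sub_eq_zero.mpr rfl]
      have hmem' : s (Ideal.Quotient.mk (IsLocalRing.maximalIdeal O) c) - c
          ∈ Ideal.span {π} := by rw [← hπ.maximalIdeal_eq]; exact hmem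
      obtain ⟨w, hw⟩ := Ideal.mem_span_singleton.mp hmem'
      show Ideal.Quotient.mk I1 (s (Ideal.Quotient.mk (IsLocalRing.maximalIdeal O) c) * π ^ m) = z
      rw [← ha, ← _root_.map_mul, Ideal.Quotient.eq]
      have : s (Ideal.Quotient.mk (IsLocalRing.maximalIdeal O) c) * π ^ m - c * π ^ m
          = π ^ (m + 1) * w := by
        rw [← sub_mul, hw]; ring
      rw [this, hI1]
      exact Ideal.mem_span_singleton.mpr ⟨w, rfl⟩
    exact Finite.of_ideal_quotient (I := Jm)

/-- EL_n(π^k O) has finite index in SL_n(O) for a complete discrete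
valuation ring O with finite residue field. -/
theorem stmt_8 (O : Type*) [CommRing O] [IsDomain O] [IsDiscreteValuationRing O]
    [IsAdicComplete (IsLocalRing.maximalIdeal O) O]
    [Finite (O ⧸ IsLocalRing.maximalIdeal O)]
    (π : O) (hπ : Irreducible π) (n : ℕ) (hn : 2 ≤ n) (k : ℕ) :
    (Subgroup.closure
      {A : Matrix.SpecialLinearGroup (Fin n) O |
        ∃ (i j : Fin n) (x : O), i ≠ j ∧
          (A : Matrix (Fin n) (Fin n) O) = 1 + Matrix.single i j (π ^ k * x)}).FiniteIndex := by
  set H : Subgroup (Matrix.SpecialLinearGroup (Fin n) O) := Subgroup.closure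
      {A : Matrix.SpecialLinearGroup (Fin n) O |
        ∃ (i j : Fin n) (x : O), i ≠ j ∧
          (A : Matrix (Fin n) (Fin n) O) = 1 + Matrix.single i j (π ^ k * x)} with hH
  have hunit : ∀ u : O, π ^ (2 * k + 1) ∣ u - 1 → ∃ v, u * v = 1 := by
    intro u hu
    have hue : IsUnit u := by
      by_contra hnu
      have hmemu : u ∈ IsLocalRing.maximalIdeal O :=
        (IsLocalRing.mem_maximalIdeal u).mpr (mem_nonunits_iff.mpr hnu)
      have hπmem : π ∈ IsLocalRing.maximalIdeal O :=
        (IsLocalRing.mem_maximalIdeal π).mpr (mem_nonunits_iff.mpr hπ.not_isUnit)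
      obtain ⟨c, hc⟩ := hu
      have hmemu1 : u - 1 ∈ IsLocalRing.maximalIdeal O := by
        rw [hc, show π ^ (2 * k + 1) * c = π * (π ^ (2 * k) * c) by ring]
        exact Ideal.mul_mem_right _ _ hπmem
      have h1 : (1 : O) ∈ IsLocalRing.maximalIdeal O := by
        have := Ideal.sub_mem _ hmemu hmemu1
        rwa [show u - (u - 1) = 1 by ring] at this
      exact (Ideal.ne_top_iff_one _).mp (IsLocalRing.maximalIdeal.isMaximal O).ne_top h1
    obtain ⟨U, hU⟩ := hue
    exact ⟨↑U⁻¹, by rw [← hU]; exact U.mul_inv⟩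
  have hele : ∀ (i j : Fin n) (hij : i ≠ j) (c : O), π ^ k ∣ c → Tsl i j hij c ∈ H := by
    intro i j hij c hc
    obtain ⟨x, hx⟩ := hc
    rw [hH]
    apply Subgroup.subset_closure
    exact ⟨i, j, x, hij, by rw [Tsl_coe, hx]; rfl⟩
  haveI hJfin : Finite (O ⧸ Ideal.span {π ^ (2 * k + 1)}) := finq O π hπ (2 * k + 1)
  set J := Ideal.span {π ^ (2 * k + 1)} with hJ
  set f := Matrix.SpecialLinearGroup.map (n := Fin n) (Ideal.Quotient.mk J) with hf
  haveI : Finite (Matrix.SpecialLinearGroup (Fin n) (O ⧸ J)) :=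
    Finite.of_injective (fun A => (A : Matrix (Fin n) (Fin n) (O ⧸ J))) Subtype.coe_injective
  haveI hFI : f.ker.FiniteIndex := Subgroup.finiteIndex_ker f
  apply Subgroup.finiteIndex_of_le (H := f.ker)
  intro A hA
  have h1 : ((f A : Matrix.SpecialLinearGroup (Fin n) (O ⧸ J)) :
      Matrix (Fin n) (Fin n) (O ⧸ J)) = 1 := by
    rw [MonoidHom.mem_ker.mp hA]
    simp
  have hcong : ∀ i j : Fin n, π ^ (2 * k + 1) ∣
      (A : Matrix (Fin n) (Fin n) O) i j - (1 : Matrix (Fin n) (Fin n) O) i j := by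
    intro i j
    have h2 : Ideal.Quotient.mk J ((A : Matrix (Fin n) (Fin n) O) i j)
        = Ideal.Quotient.mk J ((1 : Matrix (Fin n) (Fin n) O) i j) := by
      have h3 := congrFun (congrFun h1 i) j
      rw [hf] at h3
      simp only [Matrix.SpecialLinearGroup.map_apply_coe, RingHom.mapMatrix_apply,
        Matrix.map_apply] at h3
      rw [h3]
      by_cases hij : i = j
      · subst hij; simp [Matrix.one_apply_eq]
      · simp [Matrix.one_apply_ne hij]
    rw [← Ideal.mem_span_singleton, ← hJ]
    exact Ideal.Quotient.eq.mp h2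
  exact stmt8_key hele hunit n 0 A (by omega)
    (fun i j hij hlt => absurd hlt (by omega)) hcong
end

section
/- If O is a complete discrete valuation ring whose residue field has more than 3 elements, then SL_2(O) is a perfect group. -/
open Matrix

open scoped commutatorElement

namespace Stmt12Aux

variable {O : Type*} [CommRing O]

def E12 (t : O) : Matrix.SpecialLinearGroup (Fin 2) O :=
  ⟨!![1, t; 0, 1], by simp [Matrix.det_fin_two_of]⟩

def E21 (t : O) : Matrix.SpecialLinearGroup (Fin 2) O :=
  ⟨!![1, 0; t, 1], by simp [Matrix.det_fin_two_of]⟩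

def Dm (u : Oˣ) : Matrix.SpecialLinearGroup (Fin 2) O :=
  ⟨!![(u : O), 0; 0, ((u⁻¹ : Oˣ) : O)], by simp [Matrix.det_fin_two_of]⟩

lemma E12_mul (s t : O) : E12 s * E12 t = E12 (s + t) := by
  apply Subtype.ext
  show (!![1, s; 0, 1] : Matrix (Fin 2) (Fin 2) O) * !![1, t; 0, 1] = _
  rw [Matrix.mul_fin_two]
  simp [E12, add_comm]

lemma E21_mul (s t : O) : E21 s * E21 t = E21 (s + t) := by
  apply Subtype.ext
  show (!![1, 0; s, 1] : Matrix (Fin 2) (Fin 2) O) * !![1, 0; t, 1] = _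
  rw [Matrix.mul_fin_two]
  simp [E21, add_comm]

lemma E12_zero : (E12 (0 : O)) = 1 := by
  apply Subtype.ext
  simp [E12, ← Matrix.one_fin_two]

lemma E12_inv (t : O) : (E12 t)⁻¹ = E12 (-t) := by
  apply inv_eq_of_mul_eq_one_right
  rw [E12_mul]
  simp [E12_zero]

lemma E21_zero : (E21 (0 : O)) = 1 := by
  apply Subtype.ext
  simp [E21, ← Matrix.one_fin_two]

lemma E21_inv (t : O) : (E21 t)⁻¹ = E21 (-t) := by
  apply inv_eq_of_mul_eq_one_right
  rw [E21_mul]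
  simp [E21_zero]

lemma Dm_inv (u : Oˣ) : (Dm u)⁻¹ = Dm u⁻¹ := by
  apply inv_eq_of_mul_eq_one_right
  apply Subtype.ext
  show (!![(u:O), 0; 0, ((u⁻¹:Oˣ):O)] : Matrix (Fin 2) (Fin 2) O) * !![((u⁻¹:Oˣ):O), 0; 0, ((u⁻¹⁻¹:Oˣ):O)] = 1
  rw [Matrix.mul_fin_two]
  norm_num [← Matrix.one_fin_two]

lemma comm_Dm_E12 (u : Oˣ) (s : O) :
    ⁅Dm u, E12 s⁆ = E12 (((u : O)^2 - 1) * s) := by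
  rw [commutatorElement_def, E12_inv, Dm_inv]
  apply Subtype.ext
  show (!![(u:O), 0; 0, ((u⁻¹:Oˣ):O)] : Matrix (Fin 2) (Fin 2) O) * !![1, s; 0, 1] *
      !![((u⁻¹:Oˣ):O), 0; 0, (u:O)] * !![1, -s; 0, 1] = !![1, ((u:O)^2-1)*s; 0, 1]
  rw [Matrix.mul_fin_two, Matrix.mul_fin_two, Matrix.mul_fin_two]
  have h1 : (u : O) * ((u⁻¹:Oˣ):O) = 1 := by exact_mod_cast u.mul_inv
  have h2 : ((u⁻¹:Oˣ):O) * (u : O) = 1 := by exact_mod_cast u.inv_mul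
  simp only [mul_zero, zero_mul, mul_one, one_mul, add_zero, zero_add, mul_neg]
  rw [h1, h2]
  congr 2 <;> ring_nf

lemma comm_Dm_E21 (u : Oˣ) (s : O) :
    ⁅Dm u, E21 s⁆ = E21 ((((u⁻¹ : Oˣ) : O)^2 - 1) * s) := by
  rw [commutatorElement_def, E21_inv, Dm_inv]
  apply Subtype.ext
  show (!![(u:O), 0; 0, ((u⁻¹:Oˣ):O)] : Matrix (Fin 2) (Fin 2) O) * !![1, 0; s, 1] *
      !![((u⁻¹:Oˣ):O), 0; 0, (u:O)] * !![1, 0; -s, 1] = !![1, 0; (((u⁻¹:Oˣ):O)^2-1)*s, 1]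
  rw [Matrix.mul_fin_two, Matrix.mul_fin_two, Matrix.mul_fin_two]
  have h1 : (u : O) * ((u⁻¹:Oˣ):O) = 1 := by exact_mod_cast u.mul_inv
  have h2 : ((u⁻¹:Oˣ):O) * (u : O) = 1 := by exact_mod_cast u.inv_mul
  simp only [mul_zero, zero_mul, mul_one, one_mul, add_zero, zero_add, mul_neg]
  rw [h1, h2]
  congr 2 <;> ring_nf

lemma Dm_eq_prod (u : Oˣ) :
    Dm u = E12 (u : O) * E21 (-((u⁻¹ : Oˣ) : O)) * E12 (u : O) *
      (E12 (1 : O) * E21 (-1 : O) * E12 (1 : O))⁻¹ := by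
  have h1 : (u : O) * ((u⁻¹:Oˣ):O) = 1 := by exact_mod_cast u.mul_inv
  have h2 : ((u⁻¹:Oˣ):O) * (u : O) = 1 := by exact_mod_cast u.inv_mul
  rw [eq_comm, mul_inv_eq_iff_eq_mul]
  apply Subtype.ext
  show (!![1, (u:O); 0, 1] : Matrix (Fin 2) (Fin 2) O) * !![1, 0; -((u⁻¹:Oˣ):O), 1] * !![1, (u:O); 0, 1]
      = !![(u:O), 0; 0, ((u⁻¹:Oˣ):O)] * (!![1, 1; 0, 1] * !![1, 0; -1, 1] * !![1, 1; 0, 1])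
  rw [Matrix.mul_fin_two, Matrix.mul_fin_two, Matrix.mul_fin_two, Matrix.mul_fin_two,
    Matrix.mul_fin_two]
  simp only [mul_zero, zero_mul, mul_one, one_mul, add_zero, zero_add, mul_neg, neg_mul]
  refine Matrix.ext fun i j => ?_
  fin_cases i <;> fin_cases j <;> simp

section Mem

variable (ξ : Oˣ) (hξ : IsUnit ((ξ : O)^2 - 1))

include ξ hξ

lemma E12_mem (t : O) :
    E12 t ∈ commutator (Matrix.SpecialLinearGroup (Fin 2) O) := by
  have h : E12 t = ⁅Dm ξ, E12 ((↑hξ.unit⁻¹ : O) * t)⁆ := by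
    rw [comm_Dm_E12]
    congr 1
    rw [← mul_assoc]
    rw [hξ.mul_val_inv, one_mul]
  rw [h, commutator_def]
  exact Subgroup.commutator_mem_commutator (Subgroup.mem_top _) (Subgroup.mem_top _)

lemma E21_mem (t : O) :
    E21 t ∈ commutator (Matrix.SpecialLinearGroup (Fin 2) O) := by
  have hinv : IsUnit ((((ξ⁻¹ : Oˣ) : O))^2 - 1) := by
    have h : (((ξ⁻¹ : Oˣ) : O))^2 - 1 = -(((ξ⁻¹ : Oˣ) : O)^2 * ((ξ : O)^2 - 1)) := by
      have h2 : ((ξ⁻¹:Oˣ):O) * (ξ : O) = 1 := by exact_mod_cast ξ.inv_mul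
      linear_combination (((ξ⁻¹:Oˣ):O) * (ξ:O) + 1) * h2
    rw [h]
    exact (((ξ⁻¹ : Oˣ).isUnit.pow 2).mul hξ).neg
  have h : E21 t = ⁅Dm ξ, E21 ((↑hinv.unit⁻¹ : O) * t)⁆ := by
    rw [comm_Dm_E21]
    congr 1
    rw [← mul_assoc]
    rw [hinv.mul_val_inv, one_mul]
  rw [h, commutator_def]
  exact Subgroup.commutator_mem_commutator (Subgroup.mem_top _) (Subgroup.mem_top _)

lemma Dm_mem (u : Oˣ) :
    Dm u ∈ commutator (Matrix.SpecialLinearGroup (Fin 2) O) := by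
  rw [Dm_eq_prod]
  exact mul_mem (mul_mem (mul_mem (E12_mem ξ hξ _) (E21_mem ξ hξ _)) (E12_mem ξ hξ _))
    (inv_mem (mul_mem (mul_mem (E12_mem ξ hξ _) (E21_mem ξ hξ _)) (E12_mem ξ hξ _)))

lemma mem_of_unit_entry (a b c d : O) (hdet : !![a, b; c, d].det = 1) (ha : IsUnit a) :
    (⟨!![a, b; c, d], hdet⟩ : Matrix.SpecialLinearGroup (Fin 2) O) ∈
      commutator (Matrix.SpecialLinearGroup (Fin 2) O) := by
  rw [Matrix.det_fin_two_of] at hdet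
  have hinv : (↑ha.unit⁻¹ : O) * a = 1 := by
    conv_rhs => rw [← ha.unit.inv_mul]
    rw [ha.unit_spec]
  have key : (⟨!![a, b; c, d], by rw [Matrix.det_fin_two_of]; exact hdet⟩ :
      Matrix.SpecialLinearGroup (Fin 2) O)
      = E21 (c * (↑ha.unit⁻¹ : O)) * Dm ha.unit * E12 ((↑ha.unit⁻¹ : O) * b) := by
    apply Subtype.ext
    show _ = (!![1, 0; c * (↑ha.unit⁻¹ : O), 1] : Matrix (Fin 2) (Fin 2) O) *
      !![(ha.unit : O), 0; 0, (↑ha.unit⁻¹ : O)] * !![1, (↑ha.unit⁻¹ : O) * b; 0, 1]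
    rw [Matrix.mul_fin_two, Matrix.mul_fin_two, ha.unit_spec]
    refine Matrix.ext fun i j => ?_
    fin_cases i <;> fin_cases j <;> simp
    · linear_combination (-b) * hinv
    · linear_combination (-c) * hinv
    · linear_combination (↑ha.unit⁻¹ : O) * hdet + (-d - c * (↑ha.unit⁻¹ : O) * b) * hinv
  rw [key]
  exact mul_mem (mul_mem (E21_mem ξ hξ _) (Dm_mem ξ hξ _)) (E12_mem ξ hξ _)

end Mem

end Stmt12Aux

namespace Stmt12Aux

lemma mem_all {O : Type*} [CommRing O] [IsLocalRing O] (ξ : Oˣ)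
    (hξ : IsUnit ((ξ : O)^2 - 1)) (g : Matrix.SpecialLinearGroup (Fin 2) O) :
    g ∈ commutator (Matrix.SpecialLinearGroup (Fin 2) O) := by
  set a := g.1 0 0 with ha'
  set b := g.1 0 1 with hb'
  set c := g.1 1 0 with hc'
  set d := g.1 1 1 with hd'
  have hdet : a * d - b * c = 1 := by
    have := g.2
    rwa [Matrix.det_fin_two] at this
  have hdet' : (!![a, b; c, d]).det = 1 := by rw [Matrix.det_fin_two_of]; exact hdet
  have hg : g = ⟨!![a, b; c, d], hdet'⟩ := by
    apply Subtype.ext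
    refine Matrix.ext fun i j => ?_
    fin_cases i <;> fin_cases j <;> simp [ha', hb', hc', hd']
  by_cases ha : IsUnit a
  · rw [hg]; exact mem_of_unit_entry ξ hξ a b c d hdet' ha
  · have hc : IsUnit c := by
      have h1 : IsUnit (a * d + -(b * c)) := by
        rw [← sub_eq_add_neg, hdet]; exact isUnit_one
      rcases IsLocalRing.isUnit_or_isUnit_of_isUnit_add h1 with h | h
      · exact absurd (isUnit_of_mul_isUnit_left h) ha
      · exact isUnit_of_mul_isUnit_right (IsUnit.neg_iff _ |>.mp h)
    have hac : IsUnit (a + c) := by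
      have h1 : IsUnit ((a + c) + -a) := by
        have : (a + c) + -a = c := by ring
        rwa [this]
      rcases IsLocalRing.isUnit_or_isUnit_of_isUnit_add h1 with h | h
      · exact h
      · exact absurd (IsUnit.neg_iff _ |>.mp h) ha
    have hdet2 : (!![a + c, b + d; c, d]).det = 1 := by
      rw [Matrix.det_fin_two_of]; linear_combination hdet
    have hmul : E12 (1 : O) * g = ⟨!![a + c, b + d; c, d], hdet2⟩ := by
      apply Subtype.ext
      show (!![1, 1; 0, 1] : Matrix (Fin 2) (Fin 2) O) * g.1 = _
      refine Matrix.ext fun i j => ?_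
      fin_cases i <;> fin_cases j <;>
        simp [Matrix.mul_apply, Fin.sum_univ_two, ha', hb', hc', hd'] <;> ring
    have key : g = E12 (-1 : O) * (E12 (1 : O) * g) := by
      rw [← mul_assoc, E12_mul]
      norm_num [E12_zero]
    rw [key, hmul]
    exact mul_mem (E12_mem ξ hξ _) (mem_of_unit_entry ξ hξ _ _ _ _ hdet2 hac)

end Stmt12Aux

open Matrix

/-- SL₂ of a complete discrete valuation ring whose (finite) residue
field has more than 3 elements is perfect. -/
theorem stmt_12 (O : Type*) [CommRing O] [IsDomain O] [IsDiscreteValuationRing O]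
    [IsAdicComplete (IsLocalRing.maximalIdeal O) O]
    [Finite (O ⧸ IsLocalRing.maximalIdeal O)]
    (hcard : 3 < Nat.card (O ⧸ IsLocalRing.maximalIdeal O)) :
    commutator (Matrix.SpecialLinearGroup (Fin 2) O) = ⊤ := by
  classical
  letI : Field (O ⧸ IsLocalRing.maximalIdeal O) := Ideal.Quotient.field _
  haveI : Fintype (O ⧸ IsLocalRing.maximalIdeal O) := Fintype.ofFinite _
  have hex : ∃ x : O ⧸ IsLocalRing.maximalIdeal O, x ≠ 0 ∧ x ≠ 1 ∧ x ≠ -1 := by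
    by_contra h
    push_neg at h
    have hsub : (Finset.univ : Finset (O ⧸ IsLocalRing.maximalIdeal O)) ⊆ {0, 1, -1} := by
      intro x _
      simp only [Finset.mem_insert, Finset.mem_singleton]
      by_cases h0 : x = 0
      · exact Or.inl h0
      · by_cases h1 : x = 1
        · exact Or.inr (Or.inl h1)
        · exact Or.inr (Or.inr (h x h0 h1))
    have h1 := Finset.card_le_card hsub
    have h2 : ({0, 1, -1} : Finset (O ⧸ IsLocalRing.maximalIdeal O)).card ≤ 3 := by
      apply le_trans (Finset.card_insert_le _ _)
      have := Finset.card_insert_le (1 : O ⧸ IsLocalRing.maximalIdeal O) ({-1} : Finset _)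
      simp at this ⊢
      omega
    rw [Finset.card_univ] at h1
    rw [Nat.card_eq_fintype_card] at hcard
    omega
  obtain ⟨x, hx0, hx1, hxm1⟩ := hex
  obtain ⟨ξ0, rfl⟩ := Ideal.Quotient.mk_surjective x
  have hu : IsUnit ξ0 := by
    by_contra h
    have hmem : ξ0 ∈ IsLocalRing.maximalIdeal O := by
      rw [IsLocalRing.mem_maximalIdeal]
      exact h
    exact hx0 ((Ideal.Quotient.eq_zero_iff_mem).mpr hmem)
  have hu2 : IsUnit (ξ0 ^ 2 - 1) := by
    by_contra h
    have hmem : ξ0 ^ 2 - 1 ∈ IsLocalRing.maximalIdeal O := by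
      rw [IsLocalRing.mem_maximalIdeal]
      exact h
    have hz := (Ideal.Quotient.eq_zero_iff_mem).mpr hmem
    rw [map_sub, map_pow, _root_.map_one] at hz
    have : (Ideal.Quotient.mk (IsLocalRing.maximalIdeal O) ξ0 - 1) *
        (Ideal.Quotient.mk (IsLocalRing.maximalIdeal O) ξ0 + 1) = 0 := by
      linear_combination hz
    rcases mul_eq_zero.mp this with h' | h'
    · exact hx1 (sub_eq_zero.mp h')
    · exact hxm1 (eq_neg_of_add_eq_zero_left h')
  rw [eq_top_iff]
  rintro g -
  exact Stmt12Aux.mem_all hu.unit (by rwa [hu.unit_spec]) g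
end
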